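/- Assume p(x) ≥ ν > 0 and |q(x)| ≤ M for a.e. x ∈ Ω, |λ| M C < ν where C ≥ 0 is such that ∫_Ω w² dx ≤ C ∫_Ω |∇w|² dx, w is continuous and differentiable, |∇w|² and w² are integrable on Ω, and assume that w satisfies the linearized weak equation: for every smooth compactly supported φ : ℝⁿ → ℝ with support contained in Ω, ∫_Ω ( p ∇w·∇φ + λ q w φ ) dx = − ∫_Ω ( h₁ ∇u_c·∇φ + λ h₂ u_c φ − h₃ φ ) dx. If 2 ∫_Ω ( p |∇w|² + λ q w² ) dx = 0 (i.e. G_λ″(c)[h,h] = 0), then for every such φ one has ∫_Ω ( h₁ ∇u_c·∇φ + λ h₂ u_c φ − h₃ φ ) dx = 0; that is, the linearized source e(h) = −∇·(h₁ ∇u_c) + λ h₂ u_c − h₃ vanishes as a distribution on Ω. -/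

import Mathlib

open MeasureTheory Set
open scoped RealInnerProductSpace

/-- If `G_λ''(c)[h,h] = 2 ∫_Ω (p |∇w|² + λ q w²) dx = 0` where `w` solves the
linearized weak equation, then the linearized source `e(h) = -∇·(h₁ ∇u_c) + λ h₂ u_c - h₃`
vanishes as a distribution on `Ω`: its pairing with every smooth compactly supported `φ` with
support in `Ω` is zero. -/
theorem linearized_source_vanishes {n : ℕ} (hn : 1 ≤ n)
    (Ω : Set (EuclideanSpace ℝ (Fin n))) (hΩ : IsOpen Ω)
    (lam : ℝ) (p q uc h₁ h₂ h₃ w : EuclideanSpace ℝ (Fin n) → ℝ)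
    (ν M C : ℝ) (hν : 0 < ν) (hM : 0 ≤ M) (hC : 0 ≤ C)
    (hp : ∀ᵐ x ∂(volume.restrict Ω), ν ≤ p x)
    (hq : ∀ᵐ x ∂(volume.restrict Ω), |q x| ≤ M)
    (hsmall : |lam| * M * C < ν)
    (hwC : Continuous w) (hw : Differentiable ℝ w)
    (hucd : Differentiable ℝ uc)
    (hI1 : IntegrableOn (fun x => ‖gradient w x‖ ^ 2) Ω)
    (hI2 : IntegrableOn (fun x => (w x) ^ 2) Ω)
    (hI3 : IntegrableOn (fun x => p x * ‖gradient w x‖ ^ 2) Ω)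
    (hI4 : IntegrableOn (fun x => q x * (w x) ^ 2) Ω)
    (hPoincare : ∫ x in Ω, (w x) ^ 2 ≤ C * ∫ x in Ω, ‖gradient w x‖ ^ 2)
    (hIφ : ∀ φ : EuclideanSpace ℝ (Fin n) → ℝ,
      ContDiff ℝ (⊤ : ℕ∞) φ → HasCompactSupport φ → tsupport φ ⊆ Ω →
        IntegrableOn (fun x => p x * ⟪gradient w x, gradient φ x⟫
            + lam * q x * w x * φ x) Ω ∧
        IntegrableOn (fun x => h₁ x * ⟪gradient uc x, gradient φ x⟫
            + lam * h₂ x * uc x * φ x - h₃ x * φ x) Ω)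
    (hlin : ∀ φ : EuclideanSpace ℝ (Fin n) → ℝ,
      ContDiff ℝ (⊤ : ℕ∞) φ → HasCompactSupport φ → tsupport φ ⊆ Ω →
        ∫ x in Ω, (p x * ⟪gradient w x, gradient φ x⟫ + lam * q x * w x * φ x)
          = -∫ x in Ω, (h₁ x * ⟪gradient uc x, gradient φ x⟫
              + lam * h₂ x * uc x * φ x - h₃ x * φ x))
    (hzero : 2 * ∫ x in Ω, (p x * ‖gradient w x‖ ^ 2 + lam * (q x * (w x) ^ 2)) = 0) :
    ∀ φ : EuclideanSpace ℝ (Fin n) → ℝ,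
      ContDiff ℝ (⊤ : ℕ∞) φ → HasCompactSupport φ → tsupport φ ⊆ Ω →
        ∫ x in Ω, (h₁ x * ⟪gradient uc x, gradient φ x⟫
            + lam * h₂ x * uc x * φ x - h₃ x * φ x) = 0 := by
  -- abbreviations
  set A := ∫ x in Ω, ‖gradient w x‖ ^ 2 with hA
  set B := ∫ x in Ω, (w x) ^ 2 with hB
  have hA0 : 0 ≤ A := setIntegral_nonneg hΩ.measurableSet (fun x _ => by positivity)
  have hB0 : 0 ≤ B := setIntegral_nonneg hΩ.measurableSet (fun x _ => by positivity)
  have hsplit : (∫ x in Ω, p x * ‖gradient w x‖ ^ 2)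
      + lam * ∫ x in Ω, q x * (w x) ^ 2 = 0 := by
    have := hzero
    rw [integral_add hI3 (hI4.const_mul lam), integral_const_mul] at this
    linarith
  have hlow : ν * A ≤ ∫ x in Ω, p x * ‖gradient w x‖ ^ 2 := by
    rw [hA, ← integral_const_mul]
    refine integral_mono_ae (hI1.const_mul ν) hI3 ?_
    filter_upwards [hp] with x hx
    exact mul_le_mul_of_nonneg_right hx (by positivity)
  have hup : |lam * ∫ x in Ω, q x * (w x) ^ 2| ≤ |lam| * M * B := by
    rw [abs_mul]
    have h1 : |∫ x in Ω, q x * (w x) ^ 2| ≤ ∫ x in Ω, |q x * (w x) ^ 2| :=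
      (by simpa only [Real.norm_eq_abs] using norm_integral_le_integral_norm (μ := volume.restrict Ω) (f := fun x => q x * (w x) ^ 2))
    have h2 : ∫ x in Ω, |q x * (w x) ^ 2| ≤ ∫ x in Ω, M * (w x) ^ 2 := by
      refine integral_mono_ae hI4.abs (hI2.const_mul M) ?_
      filter_upwards [hq] with x hx
      rw [abs_mul, abs_of_nonneg (by positivity : (0:ℝ) ≤ (w x)^2)]
      exact mul_le_mul_of_nonneg_right hx (by positivity)
    rw [integral_const_mul] at h2
    calc |lam| * |∫ x in Ω, q x * (w x) ^ 2| ≤ |lam| * (M * B) :=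
          mul_le_mul_of_nonneg_left (h1.trans h2) (abs_nonneg _)
      _ = |lam| * M * B := by ring
  have hAzero : A = 0 := by
    by_contra hne
    have hApos : 0 < A := lt_of_le_of_ne hA0 (Ne.symm hne)
    have key : ν * A ≤ |lam| * M * C * A := by
      have h3 : ν * A ≤ - (lam * ∫ x in Ω, q x * (w x) ^ 2) := by linarith
      have h4 : - (lam * ∫ x in Ω, q x * (w x) ^ 2) ≤ |lam| * M * B :=
        (neg_le_abs _).trans hup
      have h5 : B ≤ C * A := hPoincare
      calc ν * A ≤ |lam| * M * B := h3.trans h4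
        _ ≤ |lam| * M * (C * A) :=
            mul_le_mul_of_nonneg_left h5 (by positivity)
        _ = |lam| * M * C * A := by ring
    nlinarith
  have hBzero : B = 0 := le_antisymm (by rw [hAzero] at hPoincare; simpa using hPoincare) hB0
  have hgrad0 : ∀ᵐ x ∂(volume.restrict Ω), gradient w x = 0 := by
    have h := (integral_eq_zero_iff_of_nonneg_ae
      (Filter.Eventually.of_forall fun x => by positivity) hI1).mp hAzero
    filter_upwards [h] with x hx
    have : ‖gradient w x‖ ^ 2 = 0 := hx
    simpa [pow_eq_zero_iff, norm_eq_zero] using this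
  have hw0 : ∀ᵐ x ∂(volume.restrict Ω), w x = 0 := by
    have h := (integral_eq_zero_iff_of_nonneg_ae
      (Filter.Eventually.of_forall fun x => by positivity) hI2).mp hBzero
    filter_upwards [h] with x hx
    have : (w x) ^ 2 = 0 := hx
    exact pow_eq_zero_iff (by norm_num) |>.mp this
  intro φ hφ1 hφ2 hφ3
  have hL : ∫ x in Ω, (p x * ⟪gradient w x, gradient φ x⟫ + lam * q x * w x * φ x) = 0 := by
    have : (fun x => p x * ⟪gradient w x, gradient φ x⟫ + lam * q x * w x * φ x)
        =ᵐ[volume.restrict Ω] 0 := by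
      filter_upwards [hgrad0, hw0] with x hg hwx
      simp [hg, hwx]
    rw [integral_congr_ae this]; simp
  have := hlin φ hφ1 hφ2 hφ3
  rw [hL] at this
  linarith
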